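/- Let f ∈ ℂ[x,y] be a nonconstant polynomial with leading form f_n, let C = {(x,y) ∈ ℂ² : f(x,y) = 0}, and let P : ℂ² → ℂ be a ℂ-linear map such that P(a,b) ≠ 0 for every (a,b) ∈ ℂ² ∖ {(0,0)} with f_n(a,b) = 0. Then there exist constants c > 0 and R₀ > 0 such that |P(x,y)| ≥ c·‖(x,y)‖ for every (x,y) ∈ C with ‖(x,y)‖ > R₀. -/

import Mathlib

open MvPolynomial Set
open scoped ENNReal

noncomputable section

abbrev Plane : Type := EuclideanSpace ℂ (Fin 2)

abbrev ProjPlane : Type := Projectivization ℂ (Fin 3 → ℂ)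

def curve (f : MvPolynomial (Fin 2) ℂ) : Set Plane :=
  {p | MvPolynomial.eval (fun i => p i) f = 0}

def leadingForm (f : MvPolynomial (Fin 2) ℂ) : MvPolynomial (Fin 2) ℂ :=
  MvPolynomial.homogeneousComponent f.totalDegree f

def homogenize (f : MvPolynomial (Fin 2) ℂ) : MvPolynomial (Fin 3) ℂ :=
  f.support.sum fun m =>
    MvPolynomial.monomial
      (Finsupp.single 0 (m 0) + Finsupp.single 1 (m 1) +
        Finsupp.single 2 (f.totalDegree - (m 0 + m 1))) (f.coeff m)

instance : TopologicalSpace ProjPlane :=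
  @instTopologicalSpaceQuotient { v : Fin 3 → ℂ // v ≠ 0 }
    (projectivizationSetoid ℂ (Fin 3 → ℂ)) inferInstance

def projZeros (F : MvPolynomial (Fin 3) ℂ) : Set ProjPlane :=
  {q | MvPolynomial.eval q.rep F = 0}

def lineAtInfinity : Set ProjPlane :=
  {q | q.rep 2 = 0}

def projClosure (f : MvPolynomial (Fin 2) ℂ) : Set ProjPlane :=
  projZeros (homogenize f)

def pointsAtInfinity (f : MvPolynomial (Fin 2) ℂ) : Set ProjPlane :=
  projClosure f ∩ lineAtInfinity

def singularPoints (F : MvPolynomial (Fin 3) ℂ) : Set ProjPlane :=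
  {q | MvPolynomial.eval q.rep F = 0 ∧
    ∀ i : Fin 3, MvPolynomial.eval q.rep (MvPolynomial.pderiv i F) = 0}

def SameTopType {X Y : Type*} [TopologicalSpace X] [TopologicalSpace Y]
    (A : Set X) (p : X) (B : Set Y) (q : Y) : Prop :=
  ∃ (U : Set X) (V : Set Y), IsOpen U ∧ IsOpen V ∧
    ∃ (hp : p ∈ U) (_ : q ∈ V) (h : U ≃ₜ V),
      (h ⟨p, hp⟩ : Y) = q ∧ ∀ x : U, (x : X) ∈ A ↔ (h x : Y) ∈ B

def IsBilipschitz {X Y : Type*} [MetricSpace X] [MetricSpace Y] (h : X → Y) : Prop :=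
  Function.Bijective h ∧ ∃ c : ℝ, 0 < c ∧ ∀ x y : X,
    (1 / c) * dist x y ≤ dist (h x) (h y) ∧ dist (h x) (h y) ≤ c * dist x y

def BilipschitzEquivAtInfinity (X Y : Set Plane) : Prop :=
  ∃ (K K' : Set Plane), IsCompact K ∧ IsCompact K' ∧
    ∃ h : (X \ K : Set Plane) → (Y \ K' : Set Plane), IsBilipschitz h

lemma sum_univ_eq_degree (d : Fin 2 →₀ ℕ) : ∑ i, d i = d.degree := by
  rw [Finsupp.degree]
  exact (Finset.sum_subset (Finset.subset_univ _)
    (fun i _ hi => Finsupp.notMem_support_iff.mp hi)).symm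

lemma eval_homog {φ : MvPolynomial (Fin 2) ℂ} {n : ℕ} (h : φ.IsHomogeneous n)
    (c : ℂ) (x : Fin 2 → ℂ) :
    MvPolynomial.eval (fun i => c * x i) φ = c ^ n * MvPolynomial.eval x φ := by
  rw [eval_eq', eval_eq', Finset.mul_sum]
  refine Finset.sum_congr rfl fun d hd => ?_
  have hdeg : d.degree = n := by
    have := h (mem_support_iff.mp hd)
    rw [Finsupp.degree_eq_weight_one]; exact this
  have : ∏ i, (c * x i) ^ d i = c ^ n * ∏ i, x i ^ d i := by
    simp_rw [mul_pow]
    rw [Finset.prod_mul_distrib, Finset.prod_pow_eq_pow_sum, sum_univ_eq_degree, hdeg]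
  rw [this]; ring

lemma eval_norm_le (g : MvPolynomial (Fin 2) ℂ) {x : Fin 2 → ℂ} {r : ℝ} (hr : 1 ≤ r)
    (hx : ∀ i, ‖x i‖ ≤ r) :
    ‖MvPolynomial.eval x g‖ ≤ (∑ m ∈ g.support, ‖g.coeff m‖) * r ^ g.totalDegree := by
  rw [eval_eq']
  refine (norm_sum_le _ _).trans ?_
  rw [Finset.sum_mul]
  refine Finset.sum_le_sum fun m hm => ?_
  rw [norm_mul, norm_prod]
  have h1 : ∀ i ∈ Finset.univ, ‖x i ^ m i‖ ≤ r ^ m i := by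
    intro i _
    rw [norm_pow]
    exact pow_le_pow_left₀ (norm_nonneg _) (hx i) _
  calc ‖coeff m g‖ * ∏ i, ‖x i ^ m i‖
      ≤ ‖coeff m g‖ * ∏ i, r ^ m i := by
        refine mul_le_mul_of_nonneg_left ?_ (norm_nonneg _)
        exact Finset.prod_le_prod (fun i _ => norm_nonneg _) h1
    _ = ‖coeff m g‖ * r ^ (∑ i, m i) := by rw [Finset.prod_pow_eq_pow_sum]
    _ ≤ ‖coeff m g‖ * r ^ g.totalDegree := by
        refine mul_le_mul_of_nonneg_left ?_ (norm_nonneg _)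
        refine pow_le_pow_right₀ hr ?_
        rw [sum_univ_eq_degree]
        exact MvPolynomial.le_totalDegree hm

theorem stmt13 (f : MvPolynomial (Fin 2) ℂ)
    (hf0 : 0 < f.totalDegree)
    (P : Plane →ₗ[ℂ] ℂ)
    (hP : ∀ a : Plane, a ≠ 0 →
      MvPolynomial.eval (fun i => a i) (leadingForm f) = 0 → P a ≠ 0) :
    ∃ c > (0:ℝ), ∃ R₀ > (0:ℝ), ∀ p : Plane,
      MvPolynomial.eval (fun i => p i) f = 0 → R₀ < ‖p‖ → c * ‖p‖ ≤ ‖P p‖ := by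
  set n := f.totalDegree with hn
  set L := leadingForm f with hL
  set g := f - L with hg
  -- g has total degree ≤ n - 1
  have hgdeg : g.totalDegree ≤ n - 1 := by
    refine Finset.sup_le fun m hm => ?_
    have hco : g.coeff m ≠ 0 := mem_support_iff.mp hm
    have hmn : m.degree ≠ n := by
      intro hdn
      apply hco
      rw [hg, coeff_sub, hL, leadingForm, coeff_homogeneousComponent, if_pos hdn, sub_self]
    have hco2 : g.coeff m = f.coeff m := by
      rw [hg, coeff_sub, hL, leadingForm, coeff_homogeneousComponent, if_neg hmn, sub_zero]
    have hfm : m ∈ f.support := mem_support_iff.mpr (hco2 ▸ hco)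
    have hle : m.degree ≤ n := by
      have := MvPolynomial.le_totalDegree hfm
      rwa [Finsupp.degree]
    have hsum : (m.sum fun _ e => e) = m.degree := rfl
    omega
  set C := ∑ m ∈ g.support, ‖g.coeff m‖ with hC
  have hC0 : 0 ≤ C := Finset.sum_nonneg fun _ _ => norm_nonneg _
  -- minimum of ‖P u‖ + ‖eval u L‖ on the unit sphere
  have key : ∃ ε > (0:ℝ), ∀ u : Plane, ‖u‖ = 1 →
      ε ≤ ‖P u‖ + ‖MvPolynomial.eval (fun i => u i) L‖ := by
    have hcont : Continuous fun u : Plane =>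
        ‖P u‖ + ‖MvPolynomial.eval (fun i => u i) L‖ := by
      have hPc : Continuous fun u : Plane => P u := P.continuous_of_finiteDimensional
      have hcoord : ∀ i : Fin 2, Continuous fun u : Plane => u i := fun i =>
        (continuous_apply i).comp (PiLp.continuousLinearEquiv 2 ℂ (fun _ : Fin 2 => ℂ)).continuous
      have hev : Continuous fun u : Plane => MvPolynomial.eval (fun i => u i) L := by
        simp_rw [eval_eq']
        exact continuous_finset_sum _ fun m _ =>
          continuous_const.mul (continuous_finset_prod _ fun i _ => (hcoord i).pow _)
      exact (hPc.norm).add hev.norm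
    have hS : (Metric.sphere (0 : Plane) 1).Nonempty :=
      NormedSpace.sphere_nonempty.mpr zero_le_one
    obtain ⟨u₀, hu₀S, hmin⟩ :=
      (isCompact_sphere (0 : Plane) 1).exists_isMinOn hS hcont.continuousOn
    refine ⟨‖P u₀‖ + ‖MvPolynomial.eval (fun i => u₀ i) L‖, ?_,
      fun u hu => hmin (mem_sphere_zero_iff_norm.mpr hu)⟩
    have hu₀ : u₀ ≠ 0 := by
      intro h
      have := mem_sphere_zero_iff_norm.mp hu₀S
      rw [h, norm_zero] at this; norm_num at this
    rcases eq_or_ne (MvPolynomial.eval (fun i => u₀ i) L) 0 with h0 | h0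
    · have h1 : 0 < ‖P u₀‖ := norm_pos_iff.mpr (hP u₀ hu₀ h0)
      have h2 : 0 ≤ ‖MvPolynomial.eval (fun i => u₀ i) L‖ := norm_nonneg _
      linarith
    · have h1 : 0 < ‖MvPolynomial.eval (fun i => u₀ i) L‖ := norm_pos_iff.mpr h0
      have h2 : 0 ≤ ‖P u₀‖ := norm_nonneg _
      linarith
  obtain ⟨ε, hεpos, hεmin⟩ := key
  refine ⟨ε / 2, half_pos hεpos, max 1 (2 * C / ε) + 1, by positivity, fun p hfp hRp => ?_⟩
  have h1le : (1:ℝ) ≤ max 1 (2 * C / ε) := le_max_left _ _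
  have h2le : 2 * C / ε ≤ max 1 (2 * C / ε) := le_max_right _ _
  set r := ‖p‖ with hr
  have hr1 : 1 < r := by linarith
  have hr0 : 0 < r := by linarith
  have hrC : 2 * C / ε < r := by linarith
  set u : Plane := ((r : ℂ)⁻¹) • p with hu
  have hrne : (r : ℂ) ≠ 0 := by
    simp only [ne_eq, Complex.ofReal_eq_zero]; linarith
  have hpu : p = (r : ℂ) • u := by
    rw [hu, smul_smul, mul_inv_cancel₀ hrne, one_smul]
  have huS : ‖u‖ = 1 := by
    rw [hu, norm_smul, norm_inv, Complex.norm_real, Real.norm_of_nonneg hr0.le, ← hr,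
      inv_mul_cancel₀ hr0.ne']
  have hui : ∀ i, ‖u i‖ ≤ 1 := by
    intro i
    have : ‖u i‖ ^ 2 ≤ ‖u‖ ^ 2 := by
      rw [EuclideanSpace.norm_eq, Real.sq_sqrt (by positivity)]
      exact Finset.single_le_sum (f := fun j => ‖u j‖ ^ 2)
        (fun j _ => sq_nonneg _) (Finset.mem_univ i)
    nlinarith [norm_nonneg (u i)]
  have hpi : ∀ i, (p : Plane) i = (r : ℂ) * u i := by
    intro i; rw [hpu]; rfl
  have hLhom : L.IsHomogeneous n := homogeneousComponent_isHomogeneous n f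
  have hevalL : MvPolynomial.eval (fun i => p i) L
      = (r : ℂ) ^ n * MvPolynomial.eval (fun i => u i) L := by
    have := eval_homog hLhom (r : ℂ) (fun i => u i)
    simpa [hpi] using this
  have hsplit : MvPolynomial.eval (fun i => p i) L = - MvPolynomial.eval (fun i => p i) g := by
    have h := hfp
    have hfe : MvPolynomial.eval (fun i => p i) f
        = MvPolynomial.eval (fun i => p i) L + MvPolynomial.eval (fun i => p i) g := by
      rw [hg, map_sub]; ring
    rw [h] at hfe
    linear_combination -hfe
  have hpi_norm : ∀ i, ‖(p : Plane) i‖ ≤ r := by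
    intro i
    rw [hpi, norm_mul, Complex.norm_real, Real.norm_of_nonneg hr0.le]
    calc r * ‖u i‖ ≤ r * 1 := mul_le_mul_of_nonneg_left (hui i) hr0.le
      _ = r := mul_one r
  have hgbound : ‖MvPolynomial.eval (fun i => p i) g‖ ≤ C * r ^ (n - 1) := by
    calc ‖MvPolynomial.eval (fun i => p i) g‖
        ≤ C * r ^ g.totalDegree := eval_norm_le g hr1.le hpi_norm
      _ ≤ C * r ^ (n - 1) :=
          mul_le_mul_of_nonneg_left (pow_le_pow_right₀ hr1.le hgdeg) hC0
  have hLu : ‖MvPolynomial.eval (fun i => u i) L‖ ≤ C / r := by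
    have h1 : r ^ n * ‖MvPolynomial.eval (fun i => u i) L‖ ≤ C * r ^ (n - 1) := by
      have he : ‖(r : ℂ) ^ n * MvPolynomial.eval (fun i => u i) L‖
          = r ^ n * ‖MvPolynomial.eval (fun i => u i) L‖ := by
        rw [norm_mul, norm_pow, Complex.norm_real, Real.norm_of_nonneg hr0.le]
      rw [← he, ← hevalL, hsplit, norm_neg]
      exact hgbound
    have hrn : r ^ n = r ^ (n - 1) * r := by
      rw [← pow_succ]; congr 1; omega
    rw [le_div_iff₀ hr0]
    have h2 : ‖MvPolynomial.eval (fun i => u i) L‖ * r * r ^ (n - 1) ≤ C * r ^ (n - 1) := by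
      calc ‖MvPolynomial.eval (fun i => u i) L‖ * r * r ^ (n - 1)
          = r ^ n * ‖MvPolynomial.eval (fun i => u i) L‖ := by rw [hrn]; ring
        _ ≤ C * r ^ (n - 1) := h1
    have hrn1 : (0:ℝ) < r ^ (n - 1) := by positivity
    exact le_of_mul_le_mul_right h2 hrn1
  have hCr : C / r ≤ ε / 2 := by
    rw [div_le_div_iff₀ hr0 (by norm_num : (0:ℝ) < 2)]
    have h3 : 2 * C / ε < r := hrC
    rw [div_lt_iff₀ hεpos] at h3
    nlinarith
  have hFu : ε ≤ ‖P u‖ + ‖MvPolynomial.eval (fun i => u i) L‖ := hεmin u huS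
  have hPu : ε / 2 ≤ ‖P u‖ := by
    have h2 : ‖MvPolynomial.eval (fun i => u i) L‖ ≤ ε / 2 := hLu.trans hCr
    linarith
  have hPp : ‖P p‖ = r * ‖P u‖ := by
    rw [hpu, map_smul, norm_smul, Complex.norm_real, Real.norm_of_nonneg hr0.le]
  rw [hPp]
  calc ε / 2 * r ≤ ‖P u‖ * r := mul_le_mul_of_nonneg_right hPu hr0.le
    _ = r * ‖P u‖ := mul_comm _ _
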